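/- Let K be a compact Hausdorff space and (μₙ) a bounded sequence in M(K) = C(K)*. If 𝔭 = 𝔠 and the weight of K is less than 𝔠, then every bounded sequence in the dual unit ball M₁(K) with the weak* topology has a convergent subsequence; in particular, M₁(K) is sequentially compact. -/

import Mathlib

open Filter

/-- A family of subsets of `ω` has the strong finite intersection property. -/
def HasSFIP (F : Set (Set ℕ)) : Prop :=
  ∀ G : Finset (Set ℕ), ↑G ⊆ F → (⋂₀ (↑G : Set (Set ℕ)) : Set ℕ).Infinite

/-- A family of subsets of `ω` has an infinite pseudo-intersection. -/
def HasPseudoIntersection (F : Set (Set ℕ)) : Prop :=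
  ∃ A : Set ℕ, A.Infinite ∧ ∀ B ∈ F, (A \ B).Finite

/-- The pseudo-intersection number `𝔭`. -/
noncomputable def pseudoIntersectionNumber : Cardinal :=
  sInf {c : Cardinal | ∃ F : Set (Set ℕ),
    HasSFIP F ∧ ¬ HasPseudoIntersection F ∧ Cardinal.mk F = c}

/-- The weight of a topological space: the least cardinality of a topological basis. -/
noncomputable def topWeight (X : Type*) [TopologicalSpace X] : Cardinal :=
  sInf {c : Cardinal | ∃ B : Set (Set X),
    TopologicalSpace.IsTopologicalBasis B ∧ Cardinal.mk B = c}

-- small SFIP families have pseudo-intersections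
theorem hasPI_of_small (hp : pseudoIntersectionNumber = Cardinal.continuum)
    (F : Set (Set ℕ)) (hF : HasSFIP F) (hc : Cardinal.mk F < Cardinal.continuum) :
    HasPseudoIntersection F := by
  by_contra h
  have : pseudoIntersectionNumber ≤ Cardinal.mk F := csInf_le' ⟨F, hF, h, rfl⟩
  rw [hp] at this
  exact absurd (lt_of_le_of_lt this hc) (lt_irrefl _)

-- members of the hyperfilter are infinite
theorem infinite_of_mem_hyperfilter {s : Set ℕ} (hs : s ∈ Filter.hyperfilter ℕ) :
    s.Infinite := by
  by_contra h
  rw [Set.not_infinite] at h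
  exact Filter.notMem_hyperfilter_of_finite h hs

theorem mk_finset_le_max (α : Type*) : Cardinal.mk (Finset α) ≤ max (Cardinal.mk α) Cardinal.aleph0 := by
  cases fintypeOrInfinite α with
  | inl h => exact le_max_of_le_right (Cardinal.mk_le_aleph0)
  | inr h => exact le_max_of_le_left (Cardinal.mk_finset_of_infinite α).le

theorem exists_dense_small (K : Type) [TopologicalSpace K] [CompactSpace K] [T2Space K]
    (hw : topWeight K < Cardinal.continuum) :
    ∃ D : Set C(K, ℝ), Dense D ∧ Cardinal.mk D < Cardinal.continuum := by
  classical
  -- a basis of small cardinality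
  have hne : {c : Cardinal | ∃ B : Set (Set K),
      TopologicalSpace.IsTopologicalBasis B ∧ Cardinal.mk B = c}.Nonempty :=
    ⟨_, ⟨{U | IsOpen U}, TopologicalSpace.isTopologicalBasis_opens, rfl⟩⟩
  obtain ⟨Bs, hBs, hBcard⟩ := csInf_mem hne
  have hcB : Cardinal.mk Bs < Cardinal.continuum := by
    rw [show Cardinal.mk Bs = topWeight K from hBcard]; exact hw
  -- the Urysohn functions
  set V : Finset Bs → Set K := fun s => ⋃ W ∈ s, (W : Set K) with hV
  have hVopen : ∀ s, IsOpen (V s) := fun s =>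
    isOpen_biUnion (fun W _ => hBs.isOpen W.2)
  have hury : ∀ p : Bs × Finset Bs, closure (p.1 : Set K) ⊆ V p.2 →
      ∃ f : C(K, ℝ), Set.EqOn f 0 (V p.2)ᶜ ∧ Set.EqOn f 1 (closure (p.1 : Set K)) ∧
        ∀ x, f x ∈ Set.Icc (0:ℝ) 1 := by
    intro p h
    exact exists_continuous_zero_one_of_isClosed (hVopen p.2).isClosed_compl
      isClosed_closure (Set.disjoint_left.mpr (fun x hx hx2 => hx (h hx2)))
  set g : Bs × Finset Bs → C(K, ℝ) := fun p =>
    if h : closure (p.1 : Set K) ⊆ V p.2 then (hury p h).choose else 0 with hg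
  have hgspec : ∀ p (h : closure (p.1 : Set K) ⊆ V p.2),
      Set.EqOn (g p) 0 (V p.2)ᶜ ∧ Set.EqOn (g p) 1 (closure (p.1 : Set K)) := by
    intro p h
    rw [hg]; simp only [dif_pos h]
    exact ⟨(hury p h).choose_spec.1, (hury p h).choose_spec.2.1⟩
  -- separation
  have hsep : ∀ x y : K, x ≠ y → ∃ p, g p x = 1 ∧ g p y = 0 := by
    intro x y hxy
    have hO : IsOpen ({y}ᶜ : Set K) := isOpen_compl_singleton
    have hxO : x ∈ ({y}ᶜ : Set K) := hxy
    obtain ⟨t, htx, htc, hts⟩ := exists_mem_nhds_isClosed_subset (hO.mem_nhds hxO)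
    obtain ⟨U, hU, hxU, hUt⟩ := hBs.exists_subset_of_mem_open (mem_interior_iff_mem_nhds.mpr htx)
      isOpen_interior
    have hclU : closure U ⊆ ({y}ᶜ : Set K) :=
      (closure_minimal (hUt.trans interior_subset) htc).trans hts
    -- finite subcover of closure U by basic sets inside {y}ᶜ
    have hcpt : IsCompact (closure U) := isClosed_closure.isCompact
    obtain ⟨s', hs'⟩ := hcpt.elim_finite_subcover
      (fun i : {W : Bs // (W : Set K) ⊆ ({y}ᶜ : Set K)} => (i : Set K))
      (fun i => hBs.isOpen i.1.2)
      (by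
        intro z hz
        obtain ⟨W, hW, hzW, hWO⟩ := hBs.exists_subset_of_mem_open (hclU hz) hO
        exact Set.mem_iUnion.mpr ⟨⟨⟨W, hW⟩, hWO⟩, hzW⟩)
    refine ⟨⟨⟨U, hU⟩, s'.image Subtype.val⟩, ?_, ?_⟩
    · have hsub : closure U ⊆ V (s'.image Subtype.val) := by
        intro z hz
        obtain ⟨i, hi, hzi⟩ := Set.mem_iUnion₂.mp (hs' hz)
        exact Set.mem_biUnion (Finset.mem_image_of_mem _ hi) hzi
      exact (hgspec _ hsub).2 (subset_closure hxU)
    · have hsub : closure U ⊆ V (s'.image Subtype.val) := by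
        intro z hz
        obtain ⟨i, hi, hzi⟩ := Set.mem_iUnion₂.mp (hs' hz)
        exact Set.mem_biUnion (Finset.mem_image_of_mem _ hi) hzi
      refine (hgspec _ hsub).1 ?_
      intro hyV
      obtain ⟨W, hW, hyW⟩ := Set.mem_iUnion₂.mp hyV
      obtain ⟨i, hi, rfl⟩ := Finset.mem_image.mp hW
      exact i.2 hyW rfl
  -- the separating set and its ℚ-subalgebra
  set S : Set C(K, ℝ) := Set.range g with hS
  have hScard : Cardinal.mk S < Cardinal.continuum := by
    refine lt_of_le_of_lt Cardinal.mk_range_le ?_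
    rw [Cardinal.mk_prod, Cardinal.lift_id, Cardinal.lift_id]
    refine Cardinal.mul_lt_of_lt Cardinal.aleph0_le_continuum hcB ?_
    exact lt_of_le_of_lt (mk_finset_le_max _)
      (max_lt hcB Cardinal.aleph0_lt_continuum)
  set Aq := Algebra.adjoin ℚ S with hAq
  have hAqcard : Cardinal.mk Aq < Cardinal.continuum := by
    refine lt_of_le_of_lt (Algebra.cardinalMk_adjoin_le ℚ S) ?_
    refine max_lt (max_lt ?_ hScard) Cardinal.aleph0_lt_continuum
    rw [Cardinal.mkRat]; exact Cardinal.aleph0_lt_continuum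
  refine ⟨Aq, ?_, hAqcard⟩
  -- density via Stone-Weierstrass
  have hcoe : (Aq.topologicalClosure : Set C(K, ℝ)) = closure (Aq : Set C(K, ℝ)) :=
    Subalgebra.topologicalClosure_coe Aq
  have hmul : ∀ a b : C(K, ℝ), a ∈ closure (Aq : Set C(K, ℝ)) →
      b ∈ closure (Aq : Set C(K, ℝ)) → a * b ∈ closure (Aq : Set C(K, ℝ)) := by
    intro a b ha hb
    rw [← hcoe] at ha hb ⊢
    exact mul_mem ha hb
  have hadd : ∀ a b : C(K, ℝ), a ∈ closure (Aq : Set C(K, ℝ)) →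
      b ∈ closure (Aq : Set C(K, ℝ)) → a + b ∈ closure (Aq : Set C(K, ℝ)) := by
    intro a b ha hb
    rw [← hcoe] at ha hb ⊢
    exact add_mem ha hb
  have hone : (1 : C(K, ℝ)) ∈ closure (Aq : Set C(K, ℝ)) := by
    rw [← hcoe]; exact one_mem _
  have halg : ∀ r : ℝ, algebraMap ℝ C(K, ℝ) r ∈ closure (Aq : Set C(K, ℝ)) := by
    intro r
    have key : ∀ q : ℚ, ((fun t : ℝ => t • (1 : C(K, ℝ))) ∘ ((↑) : ℚ → ℝ)) q
        ∈ (Aq : Set C(K, ℝ)) := by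
      intro q
      show (q : ℝ) • (1 : C(K, ℝ)) ∈ Aq
      rw [show ((q : ℝ)) = algebraMap ℚ ℝ q from (eq_ratCast (algebraMap ℚ ℝ) q).symm,
        algebraMap_smul]
      exact Aq.smul_mem Aq.one_mem q
    have hcont : Continuous (fun t : ℝ => t • (1 : C(K, ℝ))) :=
      continuous_id.smul continuous_const
    have hr : r ∈ closure (Set.range ((↑) : ℚ → ℝ)) := by
      rw [(Rat.denseRange_cast (𝕜 := ℝ)).closure_eq]; trivial
    have h1 : (fun t : ℝ => t • (1 : C(K, ℝ))) r ∈
        closure ((fun t : ℝ => t • (1 : C(K, ℝ))) '' Set.range ((↑) : ℚ → ℝ)) :=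
      (image_closure_subset_closure_image hcont) (Set.mem_image_of_mem _ hr)
    have h2 : ((fun t : ℝ => t • (1 : C(K, ℝ))) '' Set.range ((↑) : ℚ → ℝ))
        ⊆ (Aq : Set C(K, ℝ)) := by
      rintro _ ⟨_, ⟨q, rfl⟩, rfl⟩
      exact key q
    rw [Algebra.algebraMap_eq_smul_one]
    exact closure_mono h2 h1
  set Ar : Subalgebra ℝ C(K, ℝ) :=
    { carrier := closure (Aq : Set C(K, ℝ))
      mul_mem' := fun ha hb => hmul _ _ ha hb
      add_mem' := fun ha hb => hadd _ _ ha hb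
      one_mem' := hone
      algebraMap_mem' := fun r => halg r } with hAr
  have hsepAr : Ar.SeparatesPoints := by
    intro x y hxy
    obtain ⟨p, hp1, hp0⟩ := hsep x y hxy
    refine ⟨⇑(g p), ⟨g p, ?_, rfl⟩, ?_⟩
    · show g p ∈ closure (Aq : Set C(K, ℝ))
      exact subset_closure (Algebra.subset_adjoin ⟨p, rfl⟩)
    · rw [hp1, hp0]; norm_num
  have htop := ContinuousMap.subalgebra_topologicalClosure_eq_top_of_separatesPoints Ar hsepAr
  rw [dense_iff_closure_eq]
  have h2 : (Ar.topologicalClosure : Set C(K, ℝ)) = (⊤ : Subalgebra ℝ C(K, ℝ)) := by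
    rw [htop]
  rw [Subalgebra.topologicalClosure_coe] at h2
  have h3 : (Ar : Set C(K, ℝ)) = closure (Aq : Set C(K, ℝ)) := rfl
  rw [h3, closure_closure] at h2
  rw [h2]; rfl

theorem tendsto_of_cuts (a : ℕ → ℝ) (M : ℝ) (hb : ∀ n, |a n| ≤ M)
    (h : ∀ q : ℚ, (∀ᶠ n in atTop, a n < q) ∨ (∀ᶠ n in atTop, (q : ℝ) ≤ a n)) :
    ∃ L, Tendsto a atTop (nhds L) := by
  have hbdd : IsBoundedUnder (· ≤ ·) atTop a :=
    Filter.isBoundedUnder_of ⟨M, fun n => (abs_le.1 (hb n)).2⟩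
  have hbdd' : IsBoundedUnder (· ≥ ·) atTop a :=
    Filter.isBoundedUnder_of ⟨-M, fun n => (abs_le.1 (hb n)).1⟩
  have key : limsup a atTop ≤ liminf a atTop := by
    by_contra hlt
    push_neg at hlt
    obtain ⟨q, hq1, hq2⟩ := exists_rat_btwn hlt
    rcases h q with he | he
    · exact absurd (Filter.limsup_le_of_le hbdd'.isCoboundedUnder_le
        (he.mono fun n hn => hn.le)) (not_le.mpr hq2)
    · exact absurd (Filter.le_liminf_of_le hbdd.isCoboundedUnder_ge he) (not_le.mpr hq1)
  have heq : liminf a atTop = limsup a atTop :=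
    le_antisymm (liminf_le_limsup hbdd hbdd') key
  exact ⟨limsup a atTop, tendsto_of_liminf_eq_limsup heq rfl hbdd hbdd'⟩

/-- assume `𝔭 = 𝔠` and let `K` be a compact Hausdorff space of weight `< 𝔠`.
Then every sequence in the dual unit ball `M₁(K) ⊆ C(K)* = M(K)` has a weak*-convergent
subsequence (with limit in the ball); in particular `M₁(K)` is weak* sequentially compact. -/
theorem stmt7
    (hp : pseudoIntersectionNumber = Cardinal.continuum)
    (K : Type) [TopologicalSpace K] [CompactSpace K] [T2Space K]
    (hw : topWeight K < Cardinal.continuum)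
    (μ : ℕ → WeakDual ℝ C(K, ℝ))
    (hμ : ∀ n, ‖WeakDual.toStrongDual (μ n)‖ ≤ 1) :
    ∃ φ : ℕ → ℕ, StrictMono φ ∧ ∃ ν : WeakDual ℝ C(K, ℝ),
      ‖WeakDual.toStrongDual ν‖ ≤ 1 ∧ Tendsto (μ ∘ φ) atTop (nhds ν) := by
  classical
  obtain ⟨D, hD, hDcard⟩ := exists_dense_small K hw
  have hbound : ∀ (k : ℕ) (f : C(K, ℝ)), |μ k f| ≤ ‖f‖ := by
    intro k f
    have h1 : ‖(WeakDual.toStrongDual (μ k)) f‖ ≤ ‖WeakDual.toStrongDual (μ k)‖ * ‖f‖ :=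
      ContinuousLinearMap.le_opNorm _ _
    have h2 : (WeakDual.toStrongDual (μ k)) f = μ k f := rfl
    rw [h2, Real.norm_eq_abs] at h1
    calc |μ k f| ≤ ‖WeakDual.toStrongDual (μ k)‖ * ‖f‖ := h1
      _ ≤ 1 * ‖f‖ := mul_le_mul_of_nonneg_right (hμ k) (norm_nonneg f)
      _ = ‖f‖ := one_mul _
  set A : D × ℚ → Set ℕ := fun p => {n | μ n (p.1 : C(K, ℝ)) < (p.2 : ℝ)} with hA
  set B : D × ℚ → Set ℕ := fun p =>
    if A p ∈ Filter.hyperfilter ℕ then A p else (A p)ᶜ with hB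
  have hBmem : ∀ p, B p ∈ Filter.hyperfilter ℕ := by
    intro p
    by_cases hq : A p ∈ Filter.hyperfilter ℕ
    · rw [hB]; simp only [if_pos hq]; exact hq
    · rw [hB]; simp only [if_neg hq]
      exact (Ultrafilter.compl_mem_iff_notMem).mpr hq
  set F : Set (Set ℕ) := Set.range B with hF
  have hSFIP : HasSFIP F := by
    intro G hG
    have hmem : ⋂₀ (↑G : Set (Set ℕ)) ∈ Filter.hyperfilter ℕ := by
      refine (Filter.sInter_mem G.finite_toSet).mpr ?_
      intro s hs
      obtain ⟨p, rfl⟩ := hG hs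
      exact hBmem p
    exact infinite_of_mem_hyperfilter hmem
  have hFcard : Cardinal.mk F < Cardinal.continuum := by
    refine lt_of_le_of_lt Cardinal.mk_range_le ?_
    rw [Cardinal.mk_prod, Cardinal.lift_id, Cardinal.lift_id, Cardinal.mkRat]
    exact Cardinal.mul_lt_of_lt Cardinal.aleph0_le_continuum hDcard Cardinal.aleph0_lt_continuum
  obtain ⟨C, hCinf, hCsub⟩ := hasPI_of_small hp F hSFIP hFcard
  set φ : ℕ → ℕ := Nat.nth (· ∈ C) with hφ
  have hCinf' : {n | (fun m => m ∈ C) n}.Infinite := hCinf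
  have hmono : StrictMono φ := Nat.nth_strictMono hCinf'
  have hφmem : ∀ n, φ n ∈ C := fun n => Nat.nth_mem_of_infinite hCinf' n
  have hev : ∀ s : Set ℕ, (C \ s).Finite → ∀ᶠ n in atTop, φ n ∈ s := by
    intro s hfin
    obtain ⟨N, hN⟩ := hfin.bddAbove
    filter_upwards [eventually_ge_atTop (N + 1)] with n hn
    by_contra hns
    have h1 : φ n ≤ N := hN ⟨hφmem n, hns⟩
    have h2 : n ≤ φ n := hmono.le_apply
    omega
  have hkey : ∀ (f : D) (q : ℚ), (∀ᶠ n in atTop, μ (φ n) (f : C(K, ℝ)) < (q : ℝ)) ∨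
      (∀ᶠ n in atTop, (q : ℝ) ≤ μ (φ n) (f : C(K, ℝ))) := by
    intro f q
    have hfin : (C \ B (f, q)).Finite := hCsub _ ⟨(f, q), rfl⟩
    by_cases hq : A (f, q) ∈ Filter.hyperfilter ℕ
    · left
      have hBA : B (f, q) = A (f, q) := by rw [hB]; simp only [if_pos hq]
      rw [hBA] at hfin
      exact (hev _ hfin).mono fun n hn => hn
    · right
      have hBA : B (f, q) = (A (f, q))ᶜ := by rw [hB]; simp only [if_neg hq]
      rw [hBA] at hfin
      exact (hev _ hfin).mono fun n hn => not_lt.mp hn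
  have hconvD : ∀ f : D, ∃ L, Tendsto (fun n => μ (φ n) (f : C(K, ℝ))) atTop (nhds L) :=
    fun f => tendsto_of_cuts _ ‖(f : C(K, ℝ))‖ (fun n => hbound _ _) (fun q => hkey f q)
  have hcauchy : ∀ f : C(K, ℝ), CauchySeq (fun n => μ (φ n) f) := by
    intro f
    rw [Metric.cauchySeq_iff]
    intro ε hε
    obtain ⟨g, hgD, hgf⟩ : ∃ g ∈ D, ‖f - g‖ < ε / 3 := by
      obtain ⟨g, hgD, hgdist⟩ := Metric.mem_closure_iff.mp (hD f) (ε / 3) (by positivity)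
      exact ⟨g, hgD, by rwa [← dist_eq_norm]⟩
    obtain ⟨L, hL⟩ := hconvD ⟨g, hgD⟩
    have hLc := hL.cauchySeq
    rw [Metric.cauchySeq_iff] at hLc
    obtain ⟨N, hN⟩ := hLc (ε / 3) (by positivity)
    refine ⟨N, fun m hm n hn => ?_⟩
    have e1 : |μ (φ m) f - μ (φ m) g| ≤ ‖f - g‖ := by
      rw [← map_sub]
      exact hbound _ _
    have e2 : |μ (φ n) g - μ (φ n) f| ≤ ‖f - g‖ := by
      rw [abs_sub_comm, ← map_sub]
      exact hbound _ _
    have e3 := hN m hm n hn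
    rw [Real.dist_eq] at e3 ⊢
    have hsplit : μ (φ m) f - μ (φ n) f =
        (μ (φ m) f - μ (φ m) g) + (μ (φ m) g - μ (φ n) g) + (μ (φ n) g - μ (φ n) f) := by
      ring
    rw [hsplit]
    calc |(μ (φ m) f - μ (φ m) g) + (μ (φ m) g - μ (φ n) g) + (μ (φ n) g - μ (φ n) f)|
        ≤ |(μ (φ m) f - μ (φ m) g) + (μ (φ m) g - μ (φ n) g)| + |μ (φ n) g - μ (φ n) f| :=
          abs_add_le _ _
      _ ≤ |μ (φ m) f - μ (φ m) g| + |μ (φ m) g - μ (φ n) g| + |μ (φ n) g - μ (φ n) f| :=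
          add_le_add_left (abs_add_le _ _) _
      _ < ε / 3 + ε / 3 + ε / 3 := by
          refine add_lt_add_of_lt_of_lt (add_lt_add_of_le_of_lt ?_ e3) ?_
          · exact lt_of_le_of_lt e1 hgf |>.le
          · exact lt_of_le_of_lt e2 hgf
      _ = ε := by ring
  have hlim : ∀ f : C(K, ℝ), ∃ L, Tendsto (fun n => μ (φ n) f) atTop (nhds L) :=
    fun f => cauchySeq_tendsto_of_complete (hcauchy f)
  choose ℓ hℓ using hlim
  have hℓbound : ∀ f, ‖ℓ f‖ ≤ 1 * ‖f‖ := by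
    intro f
    rw [one_mul, Real.norm_eq_abs]
    exact le_of_tendsto (hℓ f).abs (Filter.Eventually.of_forall fun n => hbound _ f)
  set ν₀ : C(K, ℝ) →ₗ[ℝ] ℝ :=
    { toFun := ℓ
      map_add' := by
        intro f g
        refine tendsto_nhds_unique (hℓ (f + g)) ?_
        have h1 := (hℓ f).add (hℓ g)
        have h2 : (fun n => μ (φ n) f + μ (φ n) g) = fun n => μ (φ n) (f + g) := by
          funext n; rw [map_add]
        rwa [h2] at h1
      map_smul' := by
        intro c f
        refine tendsto_nhds_unique (hℓ (c • f)) ?_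
        have h1 := (hℓ f).const_mul c
        have h2 : (fun n => c * μ (φ n) f) = fun n => μ (φ n) (c • f) := by
          funext n; rw [map_smul]; rfl
        rwa [h2] at h1 } with hν₀
  set ν : StrongDual ℝ C(K, ℝ) := LinearMap.mkContinuous ν₀ 1 hℓbound with hν
  refine ⟨φ, hmono, StrongDual.toWeakDual ν, ?_, ?_⟩
  · have h3 : WeakDual.toStrongDual (StrongDual.toWeakDual ν) = ν := rfl
    rw [h3]
    exact LinearMap.mkContinuous_norm_le ν₀ zero_le_one hℓbound
  · rw [tendsto_iff_forall_eval_tendsto_topDualPairing]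
    intro f
    have h4 : (topDualPairing ℝ C(K, ℝ)) (StrongDual.toWeakDual ν) f = ℓ f := rfl
    rw [h4]
    exact hℓ f
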